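/- arXiv:2101.06494 — 2 statements merged into one kernel-verified Lean document; each statement's English description precedes it below -/
import Mathlib

section
/- Let X be a real random variable with the Gaussian distribution N(μ, σ²), σ > 0, and fix r > 0. If c₁, c₂ ∈ ℝ satisfy |c₁ − μ| ≤ |c₂ − μ|, then P(|X − c₂| ≤ r) ≤ P(|X − c₁| ≤ r). That is, the Gaussian probability of an interval of fixed length 2r centered at c is nonincreasing in the distance of c from the mean μ. -/
open ProbabilityTheory MeasureTheory Real Set
open scoped NNReal

namespace GaussAux

variable (μ : ℝ) (v : ℝ≥0)

lemma pdf_cont : Continuous (gaussianPDFReal μ v) := by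
  unfold gaussianPDFReal
  fun_prop

lemma pdf_mono {x y : ℝ} (h : |y - μ| ≤ |x - μ|) :
    gaussianPDFReal μ v x ≤ gaussianPDFReal μ v y := by
  unfold gaussianPDFReal
  have h1 : (y - μ) ^ 2 ≤ (x - μ) ^ 2 := by
    rw [← sq_abs (y - μ), ← sq_abs (x - μ)]
    exact pow_le_pow_left₀ (abs_nonneg _) h 2
  have hinv : (0:ℝ) ≤ (√(2 * π * v))⁻¹ := by positivity
  refine mul_le_mul_of_nonneg_left ?_ hinv
  refine Real.exp_le_exp.2 ?_
  rcases eq_or_lt_of_le (by positivity : (0:ℝ) ≤ 2 * v) with h0 | h0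
  · rw [← h0]; simp
  · exact (div_le_div_iff_of_pos_right h0).2 (by linarith)

lemma pdf_symm (x : ℝ) : gaussianPDFReal μ v (2 * μ - x) = gaussianPDFReal μ v x := by
  unfold gaussianPDFReal
  ring_nf

noncomputable def G (r c : ℝ) : ℝ := ∫ x in (c - r)..(c + r), gaussianPDFReal μ v x

lemma G_symm (r c : ℝ) : G μ v r (2 * μ - c) = G μ v r c := by
  unfold G
  have h := intervalIntegral.integral_comp_sub_left (a := c - r) (b := c + r)
    (gaussianPDFReal μ v) (2 * μ)
  simp only [pdf_symm] at h
  rw [show 2 * μ - c - r = 2 * μ - (c + r) by ring,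
    show 2 * μ - c + r = 2 * μ - (c - r) by ring, ← h]

lemma pdf_intervalIntegrable (a b : ℝ) :
    IntervalIntegrable (gaussianPDFReal μ v) volume a b :=
  (integrable_gaussianPDFReal μ v).intervalIntegrable

lemma G_hasDeriv (r c : ℝ) :
    HasDerivAt (G μ v r) (gaussianPDFReal μ v (c + r) - gaussianPDFReal μ v (c - r)) c := by
  have key : ∀ y : ℝ, HasDerivAt (fun u => ∫ x in μ..u, gaussianPDFReal μ v x)
      (gaussianPDFReal μ v y) y := fun y =>
    intervalIntegral.integral_hasDerivAt_right (pdf_intervalIntegrable μ v _ _)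
      ((pdf_cont μ v).stronglyMeasurable.stronglyMeasurableAtFilter)
      (pdf_cont μ v).continuousAt
  have h1 : HasDerivAt (fun u : ℝ => ∫ x in μ..(u + r), gaussianPDFReal μ v x)
      (gaussianPDFReal μ v (c + r)) c := by
    simpa [Function.comp_def, mul_one] using
      ((key (c + r)).comp c ((hasDerivAt_id c).add_const r))
  have h2 : HasDerivAt (fun u : ℝ => ∫ x in μ..(u - r), gaussianPDFReal μ v x)
      (gaussianPDFReal μ v (c - r)) c := by
    simpa [Function.comp_def, mul_one] using
      ((key (c - r)).comp c ((hasDerivAt_id c).sub_const r))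
  have hfun : G μ v r = fun u : ℝ => (∫ x in μ..(u + r), gaussianPDFReal μ v x)
      - ∫ x in μ..(u - r), gaussianPDFReal μ v x := by
    funext u
    unfold G
    rw [intervalIntegral.integral_interval_sub_left (pdf_intervalIntegrable μ v _ _)
      (pdf_intervalIntegrable μ v _ _)]
  rw [hfun]
  exact h1.sub h2

lemma G_antitoneOn (r : ℝ) (hr : 0 < r) : AntitoneOn (G μ v r) (Ici μ) := by
  apply antitoneOn_of_deriv_nonpos (convex_Ici μ)
    (fun x _ => (G_hasDeriv μ v r x).continuousAt.continuousWithinAt)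
    (fun x _ => (G_hasDeriv μ v r x).differentiableAt.differentiableWithinAt)
  intro x hx
  rw [interior_Ici, mem_Ioi] at hx
  rw [(G_hasDeriv μ v r x).deriv]
  have : gaussianPDFReal μ v (x + r) ≤ gaussianPDFReal μ v (x - r) := by
    apply pdf_mono
    rw [abs_of_nonneg (by linarith : (0:ℝ) ≤ x + r - μ)]
    rw [abs_le]; constructor <;> linarith [le_of_lt hx]
  linarith

end GaussAux

open GaussAux

/-- For a Gaussian `N(μ, σ²)` with `σ > 0` and fixed `r > 0`, the probability of the
interval of half-length `r` centered at `c` is nonincreasing in the distance `|c - μ|`. -/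
theorem gaussian_interval_monotone_in_center_distance (μ σ : ℝ) (hσ : 0 < σ)
    (r : ℝ) (hr : 0 < r) (c₁ c₂ : ℝ) (hc : |c₁ - μ| ≤ |c₂ - μ|) :
    gaussianReal μ ⟨σ ^ 2, by positivity⟩ {x | |x - c₂| ≤ r}
      ≤ gaussianReal μ ⟨σ ^ 2, by positivity⟩ {x | |x - c₁| ≤ r} := by
  set v : ℝ≥0 := ⟨σ ^ 2, by positivity⟩ with hv
  have hv0 : v ≠ 0 := by
    intro h
    have : σ ^ 2 = 0 := congrArg Subtype.val h
    nlinarith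
  have hset : ∀ c : ℝ, {x : ℝ | |x - c| ≤ r} = Icc (c - r) (c + r) := by
    intro c; ext x; simp [abs_le, sub_le_iff_le_add, le_sub_iff_add_le]
    constructor <;> intro h <;> constructor <;> linarith [h.1, h.2]
  have hG : ∀ c : ℝ, gaussianReal μ v {x | |x - c| ≤ r} = ENNReal.ofReal (G μ v r c) := by
    intro c
    rw [hset c, gaussianReal_apply_eq_integral μ hv0]
    congr 1
    rw [MeasureTheory.integral_Icc_eq_integral_Ioc,
      ← intervalIntegral.integral_of_le (by linarith)]
    rfl
  rw [hG, hG]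
  apply ENNReal.ofReal_le_ofReal
  -- reduce to centers at distance |cᵢ - μ| to the right of μ
  have hGd : ∀ c : ℝ, G μ v r c = G μ v r (μ + |c - μ|) := by
    intro c
    rcases le_or_gt μ c with h | h
    · rw [abs_of_nonneg (by linarith)]; ring_nf
    · rw [abs_of_neg (by linarith), ← G_symm μ v r c]
      congr 1; ring
  rw [hGd c₁, hGd c₂]
  exact G_antitoneOn μ v r hr (by simp [le_add_iff_nonneg_right, abs_nonneg])
    (by simp [le_add_iff_nonneg_right, abs_nonneg]) (by linarith)
end

section
/- Let d ≥ 1, σ > 0, and μ ∈ ℝ^d, and let X = (X₁,…,X_d) have independent coordinates with Xᵢ ~ N(μᵢ, σ²) (the isotropic Gaussian distribution on ℝ^d with mean μ and covariance σ²I). Then for every r > 0 and every c ∈ ℝ^d, P(‖X − c‖ ≤ r) ≤ P(‖X − μ‖ ≤ r), where ‖·‖ is the Euclidean norm. That is, the isotropic Gaussian measure of a Euclidean ball of fixed radius is maximized when the ball is centered at the mean. -/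
open ProbabilityTheory MeasureTheory Real
open scoped NNReal ENNReal

lemma gpdf_even (m : ℝ) (v : ℝ≥0) (x : ℝ) :
    gaussianPDFReal m v (2 * m - x) = gaussianPDFReal m v x := by
  simp only [gaussianPDFReal]
  congr 2
  ring

lemma gpdf_mono (m : ℝ) (v : ℝ≥0) {x y : ℝ} (h : (x - m)^2 ≤ (y - m)^2) :
    gaussianPDFReal m v y ≤ gaussianPDFReal m v x := by
  simp only [gaussianPDFReal]
  refine mul_le_mul_of_nonneg_left (Real.exp_le_exp.mpr ?_) (by positivity)
  rcases eq_or_ne (v:ℝ) 0 with h2v | h2v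
  · simp [h2v]
  · have : (0:ℝ) < 2 * v := by
      have : (0:ℝ) < v := lt_of_le_of_ne v.2 (Ne.symm h2v)
      linarith
    rw [div_le_div_iff_of_pos_right this]
    linarith

lemma gpdf_cont (m : ℝ) (v : ℝ≥0) : Continuous (gaussianPDFReal m v) := by
  rw [gaussianPDFReal_def]; fun_prop

noncomputable def Fint (m : ℝ) (v : ℝ≥0) (s b : ℝ) : ℝ :=
  ∫ x in (b - s)..(b + s), gaussianPDFReal m v x

lemma Fint_hasDeriv (m : ℝ) (v : ℝ≥0) (s b : ℝ) :
    HasDerivAt (Fint m v s)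
      (gaussianPDFReal m v (b + s) - gaussianPDFReal m v (b - s)) b := by
  set g := gaussianPDFReal m v with hg
  have hc : Continuous g := gpdf_cont m v
  have h1 : HasDerivAt (fun u => ∫ x in (0:ℝ)..u, g x) (g (b + s)) (b + s) :=
    (hc.integral_hasStrictDerivAt 0 (b + s)).hasDerivAt
  have h2 : HasDerivAt (fun u => ∫ x in (0:ℝ)..u, g x) (g (b - s)) (b - s) :=
    (hc.integral_hasStrictDerivAt 0 (b - s)).hasDerivAt
  have H1 : HasDerivAt (fun b => ∫ x in (0:ℝ)..(b + s), g x) (g (b + s)) b := by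
    have := h1.comp b ((hasDerivAt_id b).add_const s)
    rw [mul_one] at this
    exact this
  have H2 : HasDerivAt (fun b => ∫ x in (0:ℝ)..(b - s), g x) (g (b - s)) b := by
    have := h2.comp b ((hasDerivAt_id b).sub_const s)
    rw [mul_one] at this
    exact this
  have := H1.sub H2
  have heq : Fint m v s = ((fun b => ∫ x in (0:ℝ)..(b + s), g x) - fun b => ∫ x in (0:ℝ)..(b - s), g x) := by
    funext u
    show _ = (∫ x in (0:ℝ)..(u + s), g x) - ∫ x in (0:ℝ)..(u - s), g x
    rw [Fint, intervalIntegral.integral_interval_sub_left (hc.intervalIntegrable _ _)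
    (hc.intervalIntegrable _ _)]
  rw [heq]
  exact this

lemma Fint_even (m : ℝ) (v : ℝ≥0) (s a : ℝ) :
    Fint m v s (2 * m - a) = Fint m v s a := by
  have : (∫ x in (a - s)..(a + s), gaussianPDFReal m v (2 * m - x))
      = ∫ x in (2 * m - (a + s))..(2 * m - (a - s)), gaussianPDFReal m v x :=
    intervalIntegral.integral_comp_sub_left _ _
  simp only [gpdf_even] at this
  rw [Fint, Fint]
  rw [show 2 * m - a - s = 2 * m - (a + s) by ring, show 2 * m - a + s = 2 * m - (a - s) by ring,
    ← this]

lemma Fint_le (m : ℝ) (v : ℝ≥0) (s : ℝ) (hs : 0 ≤ s) (a : ℝ) :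
    Fint m v s a ≤ Fint m v s m := by
  have hanti : AntitoneOn (Fint m v s) (Set.Ici m) := by
    refine antitoneOn_of_deriv_nonpos (convex_Ici m) ?_ ?_ ?_
    · exact fun x _ => ((Fint_hasDeriv m v s x).continuousAt).continuousWithinAt
    · exact fun x _ => ((Fint_hasDeriv m v s x).differentiableAt).differentiableWithinAt
    · intro x hx
      rw [interior_Ici] at hx
      rw [(Fint_hasDeriv m v s x).deriv]
      have : (x - s - m)^2 ≤ (x + s - m)^2 := by nlinarith [(Set.mem_Ioi.mp hx).le]
      exact sub_nonpos.mpr (gpdf_mono m v this)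
  rcases le_or_gt m a with h | h
  · exact hanti (Set.self_mem_Ici) h h
  · rw [← Fint_even m v s a]
    exact hanti Set.self_mem_Ici (by simp [Set.mem_Ici]; linarith) (by linarith)

lemma gauss_sq_le (m a t : ℝ) (v : ℝ≥0) (hv : v ≠ 0) :
    gaussianReal m v {y | (y - a)^2 ≤ t} ≤ gaussianReal m v {y | (y - m)^2 ≤ t} := by
  rcases lt_or_ge t 0 with ht | ht
  · have hempty : {y : ℝ | (y - a)^2 ≤ t} = ∅ := by
      ext y
      simp only [Set.mem_setOf_eq, Set.mem_empty_iff_false, iff_false, not_le]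
      nlinarith [sq_nonneg (y - a)]
    simp [hempty]
  · set s := Real.sqrt t with hsdef
    have hs : 0 ≤ s := Real.sqrt_nonneg t
    have hss : s ^ 2 = t := Real.sq_sqrt ht
    have hset : ∀ b : ℝ, {y : ℝ | (y - b)^2 ≤ t} = Set.Icc (b - s) (b + s) := by
      intro b; ext y
      simp only [Set.mem_setOf_eq, Set.mem_Icc]
      constructor
      · intro h
        constructor <;> nlinarith
      · intro ⟨h1, h2⟩
        nlinarith
    have h1 : ∀ b : ℝ, ∫ x in Set.Icc (b - s) (b + s), gaussianPDFReal m v x = Fint m v s b := by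
      intro b
      rw [Fint, intervalIntegral.integral_of_le (by linarith), ← integral_Icc_eq_integral_Ioc]
    rw [hset a, hset m, gaussianReal_apply_eq_integral _ hv, gaussianReal_apply_eq_integral _ hv,
      h1, h1]
    exact ENNReal.ofReal_le_ofReal (Fint_le m v s hs a)

lemma step (n : ℕ) (v : ℝ≥0) (hv : v ≠ 0) (μ c : Fin (n+1) → ℝ) (i : Fin (n+1)) (r2 : ℝ) :
    (Measure.pi fun j => gaussianReal (μ j) v) {x | ∑ j, (x j - c j)^2 ≤ r2}
      ≤ (Measure.pi fun j => gaussianReal (μ j) v)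
          {x | ∑ j, (x j - Function.update c i (μ i) j)^2 ≤ r2} := by
  set ν : (j : Fin (n+1)) → Measure ℝ := fun j => gaussianReal (μ j) v with hν
  have mp := measurePreserving_piFinSuccAbove ν i
  set e := MeasurableEquiv.piFinSuccAbove (fun _ : Fin (n+1) => ℝ) i with he
  set w : Fin n → ℝ := fun j => c (i.succAbove j) with hw
  set T : ℝ → Set (ℝ × (Fin n → ℝ)) :=
    fun α => {p | (p.1 - α)^2 + ∑ j, (p.2 j - w j)^2 ≤ r2} with hT
  have hTmeas : ∀ α, MeasurableSet (T α) := by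
    intro α
    apply measurableSet_le ?_ measurable_const
    fun_prop
  have hc' : ∀ j, Function.update c i (μ i) (i.succAbove j) = w j := fun j => by
    rw [Function.update_apply, if_neg (Fin.succAbove_ne i j)]
  have hpre1 : {x : Fin (n+1) → ℝ | ∑ j, (x j - c j)^2 ≤ r2} = e ⁻¹' (T (c i)) := by
    ext x
    simp only [Set.mem_preimage, hT, Set.mem_setOf_eq, he,
      MeasurableEquiv.piFinSuccAbove_apply, Fin.insertNthEquiv, Equiv.coe_fn_symm_mk,
      Fin.removeNth]
    rw [Fin.sum_univ_succAbove (fun j => (x j - c j)^2) i]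
  have hpre2 : {x : Fin (n+1) → ℝ | ∑ j, (x j - Function.update c i (μ i) j)^2 ≤ r2}
      = e ⁻¹' (T (μ i)) := by
    ext x
    simp only [Set.mem_preimage, hT, Set.mem_setOf_eq, he,
      MeasurableEquiv.piFinSuccAbove_apply, Fin.insertNthEquiv, Equiv.coe_fn_symm_mk,
      Fin.removeNth]
    rw [Fin.sum_univ_succAbove (fun j => (x j - Function.update c i (μ i) j)^2) i,
      Function.update_self]
    simp only [hc']
  rw [hpre1, hpre2, mp.measure_preimage (hTmeas _).nullMeasurableSet,
    mp.measure_preimage (hTmeas _).nullMeasurableSet,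
    Measure.prod_apply_symm (hTmeas _), Measure.prod_apply_symm (hTmeas _)]
  apply lintegral_mono
  intro y
  have hslice : ∀ α : ℝ, (fun x => (x, y)) ⁻¹' T α
      = {x : ℝ | (x - α)^2 ≤ r2 - ∑ j, (y j - w j)^2} := by
    intro α; ext x
    simp only [Set.mem_preimage, hT, Set.mem_setOf_eq]
    constructor <;> intro h <;> linarith
  dsimp only
  rw [hslice, hslice]
  exact gauss_sq_le (μ i) (c i) _ v hv

lemma chain (n : ℕ) (v : ℝ≥0) (hv : v ≠ 0) (μ c : Fin (n+1) → ℝ) (r2 : ℝ) :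
    (Measure.pi fun j => gaussianReal (μ j) v) {x | ∑ j, (x j - c j)^2 ≤ r2}
      ≤ (Measure.pi fun j => gaussianReal (μ j) v) {x | ∑ j, (x j - μ j)^2 ≤ r2} := by
  set ck : ℕ → (Fin (n+1) → ℝ) := fun k j => if (j : ℕ) < k then μ j else c j with hck
  have h0 : ck 0 = c := funext fun j => by simp [hck]
  have hlast : ck (n+1) = μ := funext fun j => by simp [hck, j.isLt]
  have key : ∀ k, k ≤ n + 1 →
      (Measure.pi fun j => gaussianReal (μ j) v) {x | ∑ j, (x j - c j)^2 ≤ r2}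
        ≤ (Measure.pi fun j => gaussianReal (μ j) v) {x | ∑ j, (x j - ck k j)^2 ≤ r2} := by
    intro k
    induction k with
    | zero => intro _; rw [h0]
    | succ k ih =>
      intro hk
      have hkn : k < n + 1 := hk
      set i : Fin (n+1) := ⟨k, hkn⟩ with hi
      have hupdate : ck (k+1) = Function.update (ck k) i (μ i) := by
        funext j
        rw [Function.update_apply]
        by_cases hj : j = i
        · have hjk : (j : ℕ) = k := by rw [hj]
          simp only [hck, if_pos hj, hjk, Nat.lt_succ_self, if_true, hj]
          simp [hi]
        · have hjk : (j : ℕ) ≠ k := fun h => hj (Fin.ext h)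
          have : ((j : ℕ) < k + 1) = ((j : ℕ) < k) := by
            apply propext; omega
          simp only [hck, if_neg hj, this]
      refine le_trans (ih (by omega)) ?_
      rw [hupdate]
      exact step n v hv μ (ck k) i r2
  have := key (n+1) le_rfl
  rwa [hlast] at this


/-- For the isotropic Gaussian on `ℝ^d` with mean `μ` and covariance `σ²I` (the product of
one-dimensional Gaussians `N(μᵢ, σ²)`), the measure of a Euclidean ball of fixed radius
`r > 0` is maximized when the ball is centered at the mean. -/
theorem isotropic_gaussian_ball_max_at_mean (d : ℕ) (hd : 1 ≤ d) (σ : ℝ) (hσ : 0 < σ)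
    (μ : Fin d → ℝ) (r : ℝ) (hr : 0 < r) (c : Fin d → ℝ) :
    (Measure.pi fun i : Fin d => gaussianReal (μ i) ⟨σ ^ 2, by positivity⟩)
        {x | Real.sqrt (∑ i, (x i - c i) ^ 2) ≤ r}
      ≤ (Measure.pi fun i : Fin d => gaussianReal (μ i) ⟨σ ^ 2, by positivity⟩)
        {x | Real.sqrt (∑ i, (x i - μ i) ^ 2) ≤ r} := by
  obtain ⟨n, rfl⟩ : ∃ n, d = n + 1 := ⟨d - 1, by omega⟩
  have hv : (⟨σ ^ 2, by positivity⟩ : ℝ≥0) ≠ 0 := by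
    intro h
    have := congrArg NNReal.toReal h
    change σ ^ 2 = 0 at this
    nlinarith
  have hsets : ∀ b : Fin (n+1) → ℝ,
      {x : Fin (n+1) → ℝ | Real.sqrt (∑ i, (x i - b i) ^ 2) ≤ r}
        = {x | ∑ i, (x i - b i) ^ 2 ≤ r ^ 2} := by
    intro b; ext x
    simp [Real.sqrt_le_iff, hr.le]
  rw [hsets, hsets]
  exact chain n _ hv μ c (r ^ 2)
end
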